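/- Let f : M → N be a map of non-negatively graded D-modules such that the induced map M/D_+M → N/D_+N is an isomorphism, and suppose N is of the form D ⊗_k N' for some graded k-module N'. Then f is an isomorphism. -/

import Mathlib

open scoped TensorProduct
open DirectSum
set_option linter.unusedSectionVars false
set_option linter.unusedVariables false
set_option maxHeartbeats 1000000

section Aux

variable {k D : Type*} [CommRing k] [CommRing D] [Algebra k D]

section Mod
variable {P : Type*} [AddCommGroup P] [Module D P] [Module k P] [IsScalarTower k D P]
variable (𝒬 : ℕ → Submodule k P) [DirectSum.Decomposition 𝒬]

lemma aux_comp_smul (B : Module.Basis ℕ k D)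
    (hP : ∀ (i n : ℕ) (x : P), x ∈ 𝒬 n → B i • x ∈ 𝒬 (i + n)) (i m : ℕ) (y : P) :
    (DirectSum.decompose 𝒬 (B i • y) (i + m) : P) = B i • (DirectSum.decompose 𝒬 y m : P) := by
  induction y using DirectSum.Decomposition.inductionOn 𝒬 with
  | zero => simp
  | @homogeneous j x =>
    obtain ⟨x, hx⟩ := x
    by_cases hjm : j = m
    · subst hjm
      rw [DirectSum.decompose_of_mem_same 𝒬 hx,
        DirectSum.decompose_of_mem_same 𝒬 (hP i j x hx)]
    · rw [DirectSum.decompose_of_mem_ne 𝒬 hx hjm,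
        DirectSum.decompose_of_mem_ne 𝒬 (hP i j x hx) (by omega), smul_zero]
  | add a b ha hb =>
    rw [smul_add, DirectSum.decompose_add, DirectSum.decompose_add]
    simp only [DirectSum.add_apply, Submodule.coe_add]
    rw [ha, hb, smul_add]

lemma aux_comp_smul_lt (B : Module.Basis ℕ k D)
    (hP : ∀ (i n : ℕ) (x : P), x ∈ 𝒬 n → B i • x ∈ 𝒬 (i + n)) {i n : ℕ} (h : n < i) (y : P) :
    (DirectSum.decompose 𝒬 (B i • y) n : P) = 0 := by
  induction y using DirectSum.Decomposition.inductionOn 𝒬 with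
  | zero => simp
  | @homogeneous j x =>
    obtain ⟨x, hx⟩ := x
    rw [DirectSum.decompose_of_mem_ne 𝒬 (hP i j x hx) (by omega)]
  | add a b ha hb =>
    rw [smul_add, DirectSum.decompose_add]
    simp only [DirectSum.add_apply, Submodule.coe_add]
    rw [ha, hb, add_zero]

end Mod

section Map
variable {M N : Type*} [AddCommGroup M] [Module D M] [Module k M] [IsScalarTower k D M]
  [AddCommGroup N] [Module D N] [Module k N] [IsScalarTower k D N]
  (ℳ : ℕ → Submodule k M) [DirectSum.Decomposition ℳ]
  (𝒩 : ℕ → Submodule k N) [DirectSum.Decomposition 𝒩]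

lemma aux_comp_map (f : M →ₗ[D] N) (hf : ∀ (n : ℕ) (x : M), x ∈ ℳ n → f x ∈ 𝒩 n)
    (x : M) (n : ℕ) :
    (DirectSum.decompose 𝒩 (f x) n : N) = f (DirectSum.decompose ℳ x n : M) := by
  induction x using DirectSum.Decomposition.inductionOn ℳ with
  | zero => simp
  | @homogeneous j x =>
    obtain ⟨x, hx⟩ := x
    by_cases hjn : j = n
    · subst hjn
      rw [DirectSum.decompose_of_mem_same ℳ hx, DirectSum.decompose_of_mem_same 𝒩 (hf j x hx)]
    · rw [DirectSum.decompose_of_mem_ne ℳ hx hjn,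
        DirectSum.decompose_of_mem_ne 𝒩 (hf j x hx) hjn, map_zero]
  | add a b ha hb =>
    rw [map_add, DirectSum.decompose_add, DirectSum.decompose_add]
    simp only [DirectSum.add_apply, Submodule.coe_add]
    rw [ha, hb, map_add]

end Map

/-- The ideal `D₊` agrees with the `k`-span of the positive basis vectors. -/
lemma aux_ideal_eq_span (B : Module.Basis ℕ k D)
    (hmul : ∀ n m : ℕ, B n * B m = ((n + m).choose n : k) • B (n + m)) :
    (Submodule.restrictScalars k
      (Ideal.span (Set.range fun n : ℕ => B (n + 1))) : Submodule k D)
      = Submodule.span k (Set.range fun n : ℕ => B (n + 1)) := by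
  apply le_antisymm
  · intro x hx
    have hx' : x ∈ Ideal.span (Set.range fun n : ℕ => B (n + 1)) := hx
    refine Submodule.span_induction ?_ ?_ ?_ ?_ hx'
    · exact fun y hy => Submodule.subset_span hy
    · exact Submodule.zero_mem _
    · exact fun a b _ _ ha hb => Submodule.add_mem _ ha hb
    · -- smul by d : D
      intro d x _ hxmem
      have hd : d ∈ Submodule.span k (Set.range B) := by
        rw [B.span_eq]; trivial
      refine Submodule.span_induction ?_ ?_ ?_ ?_ hd
      · rintro y ⟨i, rfl⟩
        -- B i • x ∈ span, for x ∈ span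
        refine Submodule.span_induction ?_ ?_ ?_ ?_ hxmem
        · rintro z ⟨m, rfl⟩
          have : B i • B (m + 1) = ((i + (m + 1)).choose i : k) • B (i + (m + 1)) := by
            rw [smul_eq_mul, hmul i (m + 1)]
          rw [this]
          exact Submodule.smul_mem _ _ (Submodule.subset_span ⟨i + m, by simp [add_assoc]⟩)
        · rw [smul_zero]; exact Submodule.zero_mem _
        · intro a b _ _ ha hb; rw [smul_add]; exact Submodule.add_mem _ ha hb
        · intro c a _ ha
          rw [smul_comm]
          exact Submodule.smul_mem _ _ ha
      · rw [zero_smul]; exact Submodule.zero_mem _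
      · intro a b _ _ ha hb; rw [add_smul]; exact Submodule.add_mem _ ha hb
      · intro c a _ ha
        rw [smul_assoc]
        exact Submodule.smul_mem _ _ ha
  · rw [Submodule.span_le]
    rintro y ⟨n, rfl⟩
    exact Ideal.subset_span ⟨n, rfl⟩

end Aux

section Aux3
variable {k D : Type*} [CommRing k] [CommRing D] [Algebra k D]
variable {P : Type*} [AddCommGroup P] [Module D P] [Module k P] [IsScalarTower k D P]
variable (𝒬 : ℕ → Submodule k P) [DirectSum.Decomposition 𝒬]

lemma aux_comp_smul_mem (B : Module.Basis ℕ k D)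
    (hmul : ∀ n m : ℕ, B n * B m = ((n + m).choose n : k) • B (n + m))
    (hP : ∀ (i n : ℕ) (x : P), x ∈ 𝒬 n → B i • x ∈ 𝒬 (i + n))
    (W : Submodule D P) (hW : ∀ x ∈ W, ∀ n, (DirectSum.decompose 𝒬 x n : P) ∈ W)
    {x : P} (hx : x ∈ (Ideal.span (Set.range fun n : ℕ => B (n + 1))) • W) (n : ℕ) :
    (DirectSum.decompose 𝒬 x n : P) ∈ Submodule.span k
      {y | ∃ i m w, i + 1 + m = n ∧ w ∈ W ∧ w ∈ 𝒬 m ∧ y = B (i + 1) • w} := by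
  refine Submodule.smul_induction_on
    (p := fun x => (DirectSum.decompose 𝒬 x n : P) ∈ Submodule.span k
      {y | ∃ i m w, i + 1 + m = n ∧ w ∈ W ∧ w ∈ 𝒬 m ∧ y = B (i + 1) • w}) hx ?_ ?_
  · intro r hr z hz
    have hr' : r ∈ Submodule.span k (Set.range fun n : ℕ => B (n + 1)) := by
      rw [← aux_ideal_eq_span B hmul]; exact hr
    refine Submodule.span_induction ?_ ?_ ?_ ?_ hr'
    · rintro y ⟨i, rfl⟩
      by_cases hn : n < i + 1
      · rw [aux_comp_smul_lt 𝒬 B hP hn z]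
        exact Submodule.zero_mem _
      · obtain ⟨m, rfl⟩ : ∃ m, n = (i + 1) + m := ⟨n - (i + 1), by omega⟩
        rw [aux_comp_smul 𝒬 B hP (i + 1) m z]
        exact Submodule.subset_span
          ⟨i, m, (DirectSum.decompose 𝒬 z m : P), rfl, hW z hz m,
            (DirectSum.decompose 𝒬 z m).2, rfl⟩
    · rw [zero_smul]
      simp only [DirectSum.decompose_zero, DirectSum.zero_apply, Submodule.coe_zero]
      exact Submodule.zero_mem _
    · intro a b _ _ ha hb
      rw [add_smul, DirectSum.decompose_add]
      simp only [DirectSum.add_apply, Submodule.coe_add]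
      exact Submodule.add_mem _ ha hb
    · intro c a _ ha
      rw [smul_assoc, DirectSum.decompose_smul]
      simp only [DirectSum.smul_apply, Submodule.coe_smul]
      exact Submodule.smul_mem _ _ ha
  · intro a b ha hb
    rw [DirectSum.decompose_add]
    simp only [DirectSum.add_apply, Submodule.coe_add]
    exact Submodule.add_mem _ ha hb

end Aux3

section Aux4
variable {k D : Type*} [CommRing k] [CommRing D] [Algebra k D]

lemma aux_mu_inj (B : Module.Basis ℕ k D)
    (hmul : ∀ n m : ℕ, B n * B m = ((n + m).choose n : k) • B (n + m))
    {N : Type*} [AddCommGroup N] [Module D N]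
    (N' : Type*) [AddCommGroup N'] [Module k N'] (e : N ≃ₗ[D] (D ⊗[k] N')) :
    Function.Injective (TensorProduct.lift ((LinearMap.lsmul D N).comp
      (Ideal.span (Set.range fun n : ℕ => B (n + 1))).subtype)) := by
  classical
  set I : Ideal D := Ideal.span (Set.range fun n : ℕ => B (n + 1)) with hIdef
  have hBmem : ∀ m : ℕ, B (m + 1) ∈ I := fun m => Ideal.subset_span ⟨m, rfl⟩
  -- retraction r : D →ₗ[k] I of the inclusion
  let r : D →ₗ[k] I :=
    B.constr k (fun n => Nat.casesOn n 0 (fun m => ⟨B (m + 1), hBmem m⟩))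
  have hr : ∀ a : I, r (a : D) = a := by
    intro a
    have ha : (a : D) ∈ Submodule.span k (Set.range fun n : ℕ => B (n + 1)) := by
      rw [← aux_ideal_eq_span B hmul]; exact a.2
    refine Subtype.ext ?_
    refine Submodule.span_induction ?_ ?_ ?_ ?_ ha
    · rintro y ⟨m, rfl⟩
      have : r (B (m + 1)) = ⟨B (m + 1), hBmem m⟩ := B.constr_basis k _ (m + 1)
      rw [this]
    · simp
    · intro a b _ _ ha hb
      rw [map_add, Submodule.coe_add, ha, hb]
    · intro c a _ ha
      rw [map_smul, Submodule.coe_smul_of_tower, ha]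
  -- injectivity of I ⊗[k] N' → D ⊗[k] N'
  have hret : (LinearMap.rTensor N' (r ∘ₗ (I.subtype.restrictScalars k))) = LinearMap.id := by
    have : r ∘ₗ (I.subtype.restrictScalars k) = LinearMap.id := by
      ext a; exact congrArg Subtype.val (hr a)
    rw [this, LinearMap.rTensor_id]
  have hrT_inj : Function.Injective (LinearMap.rTensor N' (I.subtype.restrictScalars k)) := by
    intro u v huv
    have := congrArg (LinearMap.rTensor N' r) huv
    rwa [← LinearMap.comp_apply, ← LinearMap.comp_apply, ← LinearMap.rTensor_comp,
      hret, LinearMap.id_apply, LinearMap.id_apply] at this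
  -- the multiplication map on D ⊗[k] N' factors through cancelBaseChange
  let c := TensorProduct.AlgebraTensorModule.cancelBaseChange k D D (↥I) N'
  let μ' := TensorProduct.lift ((LinearMap.lsmul D (D ⊗[k] N')).comp I.subtype)
  have hfac : ∀ t : (↥I) ⊗[D] (D ⊗[k] N'),
      μ' t = LinearMap.rTensor N' (I.subtype.restrictScalars k) (c t) := by
    intro t
    induction t using TensorProduct.induction_on with
    | zero => simp
    | tmul a y =>
      induction y using TensorProduct.induction_on with
      | zero => simp
      | tmul d v =>
        have h1 : μ' (a ⊗ₜ (d ⊗ₜ v)) = ((a : D) * d) ⊗ₜ v := by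
          simp only [μ', TensorProduct.lift.tmul, LinearMap.coe_comp, Function.comp_apply,
            Submodule.coe_subtype, LinearMap.lsmul_apply]
          rw [TensorProduct.smul_tmul', smul_eq_mul]
        have h2 : c (a ⊗ₜ (d ⊗ₜ v)) = (d • a) ⊗ₜ v :=
          TensorProduct.AlgebraTensorModule.cancelBaseChange_tmul k D D a v d
        rw [h1, h2, LinearMap.rTensor_tmul]
        simp only [LinearMap.coe_restrictScalars, Submodule.coe_subtype]
        rw [Submodule.coe_smul, smul_eq_mul, mul_comm]
      | add y₁ y₂ h₁ h₂ =>
        rw [TensorProduct.tmul_add, map_add, map_add, h₁, h₂, map_add]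
    | add t₁ t₂ h₁ h₂ =>
      rw [map_add, map_add, h₁, h₂, map_add]
  have hμ'_inj : Function.Injective μ' := by
    intro u v huv
    have : LinearMap.rTensor N' (I.subtype.restrictScalars k) (c u)
        = LinearMap.rTensor N' (I.subtype.restrictScalars k) (c v) := by
      rw [← hfac, ← hfac, huv]
    exact c.injective (hrT_inj this)
  -- transfer along e
  let eT := LinearEquiv.lTensor (↥I) e
  have hcomm : ∀ t : (↥I) ⊗[D] N,
      μ' (eT t) = e (TensorProduct.lift ((LinearMap.lsmul D N).comp I.subtype) t) := by
    intro t
    induction t using TensorProduct.induction_on with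
    | zero => simp
    | tmul a z =>
      have h1 : eT (a ⊗ₜ z) = a ⊗ₜ (e z) := rfl
      rw [h1]
      simp only [μ', TensorProduct.lift.tmul, LinearMap.coe_comp, Function.comp_apply,
        Submodule.coe_subtype, LinearMap.lsmul_apply]
      rw [map_smul]
    | add t₁ t₂ h₁ h₂ =>
      simp only [map_add, h₁, h₂]
  intro u v huv
  have : μ' (eT u) = μ' (eT v) := by rw [hcomm, hcomm, huv]
  exact eT.injective (hμ'_inj this)

end Aux4

/-- If `f : M → N` is a map of non-negatively graded `D`-modules inducing an isomorphism
`M/D₊M → N/D₊N`, and `N ≅ D ⊗ₖ N'` for some graded `k`-module `N'`, then `f` is an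
isomorphism. The induced map being an isomorphism is encoded by: `mkQ ∘ f` is surjective
and its kernel is contained in `D₊M`. -/
theorem stmt6 (k D : Type*) [CommRing k] [CommRing D] [Algebra k D]
    (B : Module.Basis ℕ k D) (hone : B 0 = 1)
    (hmul : ∀ n m : ℕ, B n * B m = ((n + m).choose n : k) • B (n + m))
    (M N : Type*) [AddCommGroup M] [Module D M] [Module k M] [IsScalarTower k D M]
    [AddCommGroup N] [Module D N] [Module k N] [IsScalarTower k D N]
    (ℳ : ℕ → Submodule k M) [DirectSum.Decomposition ℳ]
    (𝒩 : ℕ → Submodule k N) [DirectSum.Decomposition 𝒩]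
    (hM : ∀ (i n : ℕ) (x : M), x ∈ ℳ n → B i • x ∈ ℳ (i + n))
    (hN : ∀ (i n : ℕ) (x : N), x ∈ 𝒩 n → B i • x ∈ 𝒩 (i + n))
    (N' : Type*) [AddCommGroup N'] [Module k N'] (e : N ≃ₗ[D] (D ⊗[k] N'))
    (f : M →ₗ[D] N) (hf : ∀ (n : ℕ) (x : M), x ∈ ℳ n → f x ∈ 𝒩 n)
    (hsurj : Function.Surjective
      ((Submodule.mkQ (Submodule.restrictScalars k
        ((Ideal.span (Set.range fun n : ℕ => B (n + 1))) • (⊤ : Submodule D N)))).comp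
        (f.restrictScalars k)))
    (hinj : ∀ m : M,
      (Submodule.mkQ (Submodule.restrictScalars k
        ((Ideal.span (Set.range fun n : ℕ => B (n + 1))) • (⊤ : Submodule D N)))) (f m) = 0 →
      m ∈ Submodule.restrictScalars k
        ((Ideal.span (Set.range fun n : ℕ => B (n + 1))) • (⊤ : Submodule D M))) :
    Function.Bijective f := by
  classical
  set I : Ideal D := Ideal.span (Set.range fun n : ℕ => B (n + 1)) with hIdef
  -- Surjectivity by induction on the degree
  have hrange : ∀ n : ℕ, ∀ y ∈ 𝒩 n, y ∈ (LinearMap.range f).restrictScalars k := by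
    intro n
    induction n using Nat.strong_induction_on with
    | _ n IH =>
      intro y hy
      obtain ⟨m, hm⟩ := hsurj (Submodule.mkQ _ y)
      have hmem : f m - y ∈ I • (⊤ : Submodule D N) := by
        have : f m - y ∈ Submodule.restrictScalars k (I • (⊤ : Submodule D N)) := by
          rw [← Submodule.Quotient.eq]
          exact hm
        exact this
      have hcomp := aux_comp_smul_mem 𝒩 B hmul hN ⊤ (fun _ _ _ => trivial) hmem n
      have hcy : (DirectSum.decompose 𝒩 (f m - y) n : N)
          = f (DirectSum.decompose ℳ m n : M) - y := by
        rw [DirectSum.decompose_sub]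
        simp only [DirectSum.sub_apply, Submodule.coe_sub]
        rw [aux_comp_map ℳ 𝒩 f hf m n, DirectSum.decompose_of_mem_same 𝒩 hy]
      rw [hcy] at hcomp
      have hTle : Submodule.span k
          {y | ∃ i m w, i + 1 + m = n ∧ w ∈ (⊤ : Submodule D N) ∧ w ∈ 𝒩 m ∧ y = B (i + 1) • w}
          ≤ (LinearMap.range f).restrictScalars k := by
        rw [Submodule.span_le]
        rintro _ ⟨i, m', w, hsum, -, hw, rfl⟩
        obtain ⟨u, hu⟩ := IH m' (by omega) w hw
        exact ⟨B (i + 1) • u, by rw [map_smul, hu]⟩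
      have h1 := hTle hcomp
      have h2 : f (DirectSum.decompose ℳ m n : M) ∈ (LinearMap.range f).restrictScalars k :=
        ⟨_, rfl⟩
      have : y = f (DirectSum.decompose ℳ m n : M)
          - (f (DirectSum.decompose ℳ m n : M) - y) := (sub_sub_cancel _ _).symm
      rw [this]
      exact sub_mem h2 h1
  have hfsurj : Function.Surjective f := by
    intro y
    have : y ∈ (LinearMap.range f).restrictScalars k := by
      induction y using DirectSum.Decomposition.inductionOn 𝒩 with
      | zero => exact zero_mem _
      | @homogeneous j x => exact hrange j x x.2
      | add a b ha hb => exact add_mem ha hb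
    exact this
  refine ⟨?_, hfsurj⟩
  -- Injectivity
  set K : Submodule D M := LinearMap.ker f with hKdef
  have hKgr : ∀ x ∈ K, ∀ n, (DirectSum.decompose ℳ x n : M) ∈ K := by
    intro x hx n
    have hx0 : f x = 0 := hx
    show f _ = 0
    rw [← aux_comp_map ℳ 𝒩 f hf x n, hx0]
    simp
  set μM : (↥I) ⊗[D] M →ₗ[D] M :=
    TensorProduct.lift ((LinearMap.lsmul D M).comp I.subtype) with hμM
  set μN : (↥I) ⊗[D] N →ₗ[D] N :=
    TensorProduct.lift ((LinearMap.lsmul D N).comp I.subtype) with hμN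
  have hμinj : Function.Injective μN := aux_mu_inj B hmul N' e
  have hKle : K ≤ I • K := by
    intro x hx
    have hfx : f x = 0 := hx
    have hxI : x ∈ I • (⊤ : Submodule D M) := by
      have := hinj x (by rw [hfx, map_zero])
      exact this
    obtain ⟨ξ, hξ⟩ : ∃ ξ : (↥I) ⊗[D] M, μM ξ = x := by
      refine Submodule.smul_induction_on (p := fun x => ∃ ξ, μM ξ = x) hxI ?_ ?_
      · intro a ha z _
        exact ⟨⟨a, ha⟩ ⊗ₜ z, by simp [hμM, TensorProduct.lift.tmul]⟩
      · rintro a b ⟨ξ₁, rfl⟩ ⟨ξ₂, rfl⟩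
        exact ⟨ξ₁ + ξ₂, map_add _ _ _⟩
    have hcomm : ∀ t : (↥I) ⊗[D] M, μN (LinearMap.lTensor (↥I) f t) = f (μM t) := by
      intro t
      induction t using TensorProduct.induction_on with
      | zero => simp
      | tmul a z =>
        simp only [LinearMap.lTensor_tmul, hμM, hμN, TensorProduct.lift.tmul,
          LinearMap.coe_comp, Function.comp_apply, Submodule.coe_subtype,
          LinearMap.lsmul_apply, map_smul]
      | add t₁ t₂ h₁ h₂ => simp only [map_add, h₁, h₂]
    have hz : LinearMap.lTensor (↥I) f ξ = 0 := by
      apply hμinj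
      rw [hcomm, hξ, map_zero, hfx]
    have hexact := lTensor_exact (↥I) f.exact_subtype_ker_map hfsurj
    obtain ⟨η, hη⟩ := (hexact ξ).mp hz
    rw [← hξ, ← hη]
    clear hη hz hξ hxI hfx hx
    induction η using TensorProduct.induction_on with
    | zero => rw [map_zero, map_zero]; exact zero_mem _
    | tmul a z =>
      have : μM (LinearMap.lTensor (↥I) (LinearMap.ker f).subtype (a ⊗ₜ z)) = (a : D) • (z : M) := by
        simp [hμM, TensorProduct.lift.tmul]
      rw [this]
      exact Submodule.smul_mem_smul a.2 z.2
    | add t₁ t₂ h₁ h₂ =>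
      rw [map_add, map_add]
      exact add_mem h₁ h₂
  -- graded Nakayama
  have hKbot : ∀ n : ℕ, ∀ x ∈ K, x ∈ ℳ n → x = 0 := by
    intro n
    induction n using Nat.strong_induction_on with
    | _ n IH =>
      intro x hxK hxn
      have hx' := aux_comp_smul_mem ℳ B hmul hM K hKgr (hKle hxK) n
      rw [DirectSum.decompose_of_mem_same ℳ hxn] at hx'
      have hble : Submodule.span k
          {y | ∃ i m w, i + 1 + m = n ∧ w ∈ K ∧ w ∈ ℳ m ∧ y = B (i + 1) • w}
          ≤ (⊥ : Submodule k M) := by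
        rw [Submodule.span_le]
        rintro _ ⟨i, m, w, hsum, hwK, hwm, rfl⟩
        have : w = 0 := IH m (by omega) w hwK hwm
        simp [this]
      simpa using hble hx'
  have hK : ∀ x ∈ K, x = 0 := by
    intro x hx
    rw [← DirectSum.sum_support_decompose ℳ x]
    apply Finset.sum_eq_zero
    intro n _
    exact hKbot n _ (hKgr x hx n) (DirectSum.decompose ℳ x n).2
  intro a b hab
  have : a - b = 0 := hK _ (by simp [hKdef, LinearMap.mem_ker, map_sub, hab])
  exact sub_eq_zero.mp this
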